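/- The generating function B_4(q,z) = Σ_w q^{|w|} z^{t(w)}, summed over all words w over {1,2,3,4}, where t(w) counts indices i with w_{i+1} − w_i = 2, equals 1/(1 − 4q − 2q²(z−1)). -/

import Mathlib

/-- For a word `w` of length `n` over {1,2,3,4} (modeled as `Fin n → Fin 4`,
letters `(w i : ℕ) + 1`), `tStat w = |{i : w_{i+1} − w_i = 2}|`. -/
noncomputable def tStat {n : ℕ} (w : Fin n → Fin 4) : ℕ :=
  Nat.card {ij : Fin n × Fin n //
    (ij.2 : ℕ) = (ij.1 : ℕ) + 1 ∧ ((w ij.2 : ℕ) = (w ij.1 : ℕ) + 2)}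

/-- Counting version of `tStat`. -/
def cnt (n : ℕ) (w : Fin n → Fin 4) : ℕ :=
  ∑ ij : Fin n × Fin n,
    if (ij.2 : ℕ) = (ij.1 : ℕ) + 1 ∧ ((w ij.2 : ℕ) = (w ij.1 : ℕ) + 2) then 1 else 0

lemma tStat_eq_cnt {n : ℕ} (w : Fin n → Fin 4) : tStat w = cnt n w := by
  classical
  rw [tStat, Nat.card_eq_fintype_card, Fintype.card_subtype, Finset.card_filter, cnt]

lemma snocEquiv_eq {n : ℕ} (c : Fin 4) (v : Fin n → Fin 4) :
    (Fin.snocEquiv (fun _ => Fin 4)) (c, v) = Fin.snoc v c := rfl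

lemma cnt_snoc (n : ℕ) (v : Fin n → Fin 4) (c : Fin 4) :
    cnt (n + 1) (Fin.snoc v c) =
      cnt n v + ∑ i : Fin n, (if n = (i : ℕ) + 1 ∧ (c : ℕ) = (v i : ℕ) + 2 then 1 else 0) := by
  classical
  unfold cnt
  rw [Fintype.sum_prod_type, Fin.sum_univ_castSucc]
  have h2 : (∑ j : Fin (n + 1),
      if (j : ℕ) = ((Fin.last n : Fin (n+1)) : ℕ) + 1 ∧
        (((Fin.snoc v c : Fin (n+1) → Fin 4) j : ℕ) =
          ((Fin.snoc v c : Fin (n+1) → Fin 4) (Fin.last n) : ℕ) + 2) then 1 else 0) = 0 := by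
    apply Finset.sum_eq_zero
    intro j _
    have hj : (j : ℕ) < n + 1 := j.is_lt
    simp only [Fin.val_last]
    rw [if_neg]
    rintro ⟨h, -⟩
    omega
  rw [h2, add_zero]
  have h1 : ∀ i : Fin n, (∑ j : Fin (n + 1),
      if (j : ℕ) = ((Fin.castSucc i : Fin (n+1)) : ℕ) + 1 ∧
        (((Fin.snoc v c : Fin (n+1) → Fin 4) j : ℕ) =
          ((Fin.snoc v c : Fin (n+1) → Fin 4) (Fin.castSucc i) : ℕ) + 2) then 1 else 0)
      = (∑ j : Fin n, if (j : ℕ) = (i : ℕ) + 1 ∧ ((v j : ℕ) = (v i : ℕ) + 2) then 1 else 0)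
        + (if n = (i : ℕ) + 1 ∧ (c : ℕ) = (v i : ℕ) + 2 then 1 else 0) := by
    intro i
    rw [Fin.sum_univ_castSucc]
    simp [Fin.snoc_castSucc, Fin.snoc_last]
  simp only [h1]
  rw [Fintype.sum_prod_type, Finset.sum_add_distrib]

/-- The polynomial `A n = Σ_w X^{t(w)}`. -/
noncomputable def A (n : ℕ) : Polynomial ℤ :=
  ∑ w : Fin n → Fin 4, (Polynomial.X : Polynomial ℤ) ^ cnt n w

lemma A_succ (n : ℕ) : A (n + 1) =
    ∑ c : Fin 4, ∑ v : Fin n → Fin 4, (Polynomial.X : Polynomial ℤ) ^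
      (cnt n v + ∑ i : Fin n, (if n = (i : ℕ) + 1 ∧ (c : ℕ) = (v i : ℕ) + 2 then 1 else 0)) := by
  classical
  rw [A, ← Equiv.sum_comp (Fin.snocEquiv (fun _ => Fin 4))
    (fun w => (Polynomial.X : Polynomial ℤ) ^ cnt (n+1) w), Fintype.sum_prod_type]
  exact Finset.sum_congr rfl fun c _ => Finset.sum_congr rfl fun v _ => by
    rw [snocEquiv_eq, cnt_snoc]

lemma A_zero : A 0 = 1 := by
  simp [A, cnt]

lemma A_one : A 1 = 4 := by
  have h : ∀ w : Fin 1 → Fin 4, cnt 1 w = 0 := by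
    intro w
    apply Finset.sum_eq_zero
    intro ij _
    have := ij.2.is_lt
    rw [if_neg]
    rintro ⟨h, -⟩
    omega
  rw [A]
  simp only [h, pow_zero]
  simp

lemma boundary (m : ℕ) (v : Fin (m + 1) → Fin 4) (c : Fin 4) :
    (∑ i : Fin (m + 1), if m + 1 = (i : ℕ) + 1 ∧ (c : ℕ) = (v i : ℕ) + 2 then 1 else 0)
      = (if (c : ℕ) = (v (Fin.last m) : ℕ) + 2 then 1 else 0) := by
  rw [Fin.sum_univ_castSucc]
  have h : (∑ i : Fin m, if m + 1 = ((Fin.castSucc i : Fin (m+1)) : ℕ) + 1 ∧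
      (c : ℕ) = ((v (Fin.castSucc i)) : ℕ) + 2 then 1 else 0) = 0 := by
    apply Finset.sum_eq_zero
    intro i _
    have := i.is_lt
    rw [if_neg]
    rintro ⟨h, -⟩
    simp only [Fin.coe_castSucc] at h
    omega
  rw [h, zero_add]
  simp

lemma B_eq (m : ℕ) :
    (∑ v : Fin (m + 1) → Fin 4,
      (if (v (Fin.last m) : ℕ) ≤ 1 then (1 : Polynomial ℤ) else 0) *
        (Polynomial.X : Polynomial ℤ) ^ cnt (m + 1) v) = 2 * A m := by
  classical
  rw [← Equiv.sum_comp (Fin.snocEquiv (fun _ => Fin 4))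
    (fun v => (if (v (Fin.last m) : ℕ) ≤ 1 then (1 : Polynomial ℤ) else 0) *
      (Polynomial.X : Polynomial ℤ) ^ cnt (m+1) v), Fintype.sum_prod_type]
  have key : ∀ c : Fin 4, ∀ u : Fin m → Fin 4,
      (if ((Fin.snocEquiv (fun _ => Fin 4) (c, u)) (Fin.last m) : ℕ) ≤ 1 then (1 : Polynomial ℤ) else 0) *
        (Polynomial.X : Polynomial ℤ) ^ cnt (m+1) (Fin.snocEquiv (fun _ => Fin 4) (c, u))
      = (if (c : ℕ) ≤ 1 then (1 : Polynomial ℤ) else 0) *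
        (Polynomial.X : Polynomial ℤ) ^ cnt m u := by
    intro c u
    rw [snocEquiv_eq, Fin.snoc_last, cnt_snoc]
    by_cases hc : (c : ℕ) ≤ 1
    · have hz : (∑ i : Fin m, if m = (i : ℕ) + 1 ∧ (c : ℕ) = (u i : ℕ) + 2 then 1 else 0) = 0 := by
        apply Finset.sum_eq_zero
        intro i _
        rw [if_neg]
        rintro ⟨-, h⟩
        omega
      rw [hz, add_zero]
    · simp [hc]
  simp only [key]
  rw [Fin.sum_univ_four]
  have e0 : ((0 : Fin 4) : ℕ) = 0 := rfl
  have e1 : ((1 : Fin 4) : ℕ) = 1 := rfl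
  have e2 : ((2 : Fin 4) : ℕ) = 2 := rfl
  have e3 : ((3 : Fin 4) : ℕ) = 3 := rfl
  have A_eq : (∑ u : Fin m → Fin 4, (Polynomial.X : Polynomial ℤ) ^ cnt m u) = A m := rfl
  simp only [e0, e1, e2, e3]
  norm_num [A_eq]
  ring

lemma A_rec (m : ℕ) : A (m + 2) = 4 * A (m + 1) + 2 * (Polynomial.X - 1) * A m := by
  classical
  rw [A_succ (m + 1)]
  have step : ∀ c : Fin 4, ∀ v : Fin (m + 1) → Fin 4,
      (Polynomial.X : Polynomial ℤ) ^
        (cnt (m+1) v + ∑ i : Fin (m+1), (if m + 1 = (i : ℕ) + 1 ∧ (c : ℕ) = (v i : ℕ) + 2 then 1 else 0))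
      = (Polynomial.X : Polynomial ℤ) ^ cnt (m+1) v *
        (if (c : ℕ) = (v (Fin.last m) : ℕ) + 2 then Polynomial.X else 1) := by
    intro c v
    rw [boundary, pow_add]
    by_cases h : (c : ℕ) = (v (Fin.last m) : ℕ) + 2 <;> simp [h]
  simp only [step]
  rw [Finset.sum_comm]
  have inner : ∀ v : Fin (m + 1) → Fin 4,
      (∑ c : Fin 4, (Polynomial.X : Polynomial ℤ) ^ cnt (m+1) v *
        (if (c : ℕ) = (v (Fin.last m) : ℕ) + 2 then Polynomial.X else 1))
      = 4 * (Polynomial.X : Polynomial ℤ) ^ cnt (m+1) v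
        + (Polynomial.X - 1) *
          ((if (v (Fin.last m) : ℕ) ≤ 1 then (1 : Polynomial ℤ) else 0) *
            (Polynomial.X : Polynomial ℤ) ^ cnt (m+1) v) := by
    intro v
    rw [← Finset.mul_sum, Fin.sum_univ_four]
    have e0 : ((0 : Fin 4) : ℕ) = 0 := rfl
    have e1 : ((1 : Fin 4) : ℕ) = 1 := rfl
    have e2 : ((2 : Fin 4) : ℕ) = 2 := rfl
    have e3 : ((3 : Fin 4) : ℕ) = 3 := rfl
    simp only [e0, e1, e2, e3]
    have h4 := (v (Fin.last m)).is_lt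
    interval_cases h : ((v (Fin.last m)) : ℕ) <;> norm_num <;> ring
  simp only [inner]
  rw [Finset.sum_add_distrib, ← Finset.mul_sum, ← Finset.mul_sum, B_eq]
  rw [show (∑ v : Fin (m+1) → Fin 4, (Polynomial.X : Polynomial ℤ) ^ cnt (m+1) v) = A (m+1) from rfl]
  ring

/-- `B_4(q,z) = Σ_w q^{|w|} z^{t(w)} = 1/(1 − 4q − 2q²(z−1))`, as an identity
of formal power series in `q` over `ℤ[z]`. -/
theorem stmt14 :
    (1 - 4 * PowerSeries.X - 2 * PowerSeries.X ^ 2 *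
        (PowerSeries.C (Polynomial.X : Polynomial ℤ) - 1)) *
    PowerSeries.mk (fun n => ∑ w : Fin n → Fin 4,
        (Polynomial.X : Polynomial ℤ) ^ tStat w) = 1 := by
  classical
  have hfun : (fun n => ∑ w : Fin n → Fin 4, (Polynomial.X : Polynomial ℤ) ^ tStat w) = A := by
    funext n
    simp only [A, tStat_eq_cnt]
  rw [hfun]
  have expand : (1 - 4 * PowerSeries.X - 2 * PowerSeries.X ^ 2 *
      (PowerSeries.C (Polynomial.X : Polynomial ℤ) - 1)) * PowerSeries.mk A
      = PowerSeries.mk A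
        - (PowerSeries.C (4 : Polynomial ℤ)) * (PowerSeries.X ^ 1 * PowerSeries.mk A)
        - (PowerSeries.C (2 * (Polynomial.X - 1) : Polynomial ℤ)) *
            (PowerSeries.X ^ 2 * PowerSeries.mk A) := by
    have h4 : (4 : PowerSeries (Polynomial ℤ)) = PowerSeries.C (4 : Polynomial ℤ) := by
      simp [map_ofNat]
    have h2 : (2 : PowerSeries (Polynomial ℤ)) = PowerSeries.C (2 : Polynomial ℤ) := by
      simp [map_ofNat]
    rw [map_mul, map_sub, map_one, h4, h2]
    ring
  rw [expand]
  refine PowerSeries.ext fun n => ?_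
  simp only [map_sub, PowerSeries.coeff_C_mul, PowerSeries.coeff_X_pow_mul',
    PowerSeries.coeff_mk, PowerSeries.coeff_one]
  match n with
  | 0 => simp [A_zero]
  | 1 => norm_num [A_one, A_zero]
  | (m + 2) =>
    have h1 : 1 ≤ m + 2 := by omega
    have h2 : 2 ≤ m + 2 := by omega
    rw [if_pos h1, if_pos h2, if_neg (by omega : ¬ m + 2 = 0)]
    rw [show m + 2 - 1 = m + 1 from rfl, show m + 2 - 2 = m from rfl, A_rec m]
    ring
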